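/- For any pure state ψ = Σ_{p=1}^k z_p ⊗ w_p of Schmidt rank at most k in C^d ⊗ C^d, defining z = Σ_{p=1}^k |p⟩ ⊗ |z_p⟩ ∈ C^k ⊗ C^d and w = Σ_{q=1}^k |q⟩ ⊗ |w_q⟩ ∈ C^k ⊗ C^d, one has ⟨ψ| X |ψ⟩ = ⟨z ⊗ w| (k |φ_k⟩⟨φ_k| ⊗ X) |z ⊗ w⟩, where |φ_k⟩ = (1/√k) Σ_{i=1}^k |i⟩⊗|i⟩ is the maximally entangled state on C^k ⊗ C^k (with the tensor factors reordered so that the two C^k factors pair with φ_k and the two C^d factors pair with X). -/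
import Mathlib


open scoped Matrix

/-- For a pure state `ψ = ∑_{p=1}^k z_p ⊗ w_p` of Schmidt rank at most `k` in `ℂ^d ⊗ ℂ^d`,
with `z = ∑_p |p⟩⊗|z_p⟩` and `w = ∑_q |q⟩⊗|w_q⟩` in `ℂ^k ⊗ ℂ^d`, one has
`⟨ψ|X|ψ⟩ = ⟨z⊗w| (k·|φ_k⟩⟨φ_k| ⊗ X) |z⊗w⟩`, where `φ_k` is the normalized maximally
entangled state on `ℂ^k ⊗ ℂ^k` and the tensor factors are reordered so that the two
`ℂ^k` factors pair with `φ_k` and the two `ℂ^d` factors pair with `X`. -/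
theorem stmt1 (d k : ℕ) (hk : 0 < k)
    (X : Matrix (Fin d × Fin d) (Fin d × Fin d) ℂ) (hX : X.IsHermitian)
    (z w : Fin k → Fin d → ℂ) :
    let ψ : Fin d × Fin d → ℂ := fun x => ∑ p, z p x.1 * w p x.2
    let z' : Fin k × Fin d → ℂ := fun q => z q.1 q.2
    let w' : Fin k × Fin d → ℂ := fun q => w q.1 q.2
    let φ : Fin k × Fin k → ℂ := fun ij => if ij.1 = ij.2 then ((1 / Real.sqrt k : ℝ) : ℂ) else 0
    let M : Matrix ((Fin k × Fin d) × (Fin k × Fin d)) ((Fin k × Fin d) × (Fin k × Fin d)) ℂ :=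
      fun r c => (k : ℂ) * φ (r.1.1, r.2.1) * star (φ (c.1.1, c.2.1)) *
        X (r.1.2, r.2.2) (c.1.2, c.2.2)
    let zw : (Fin k × Fin d) × (Fin k × Fin d) → ℂ := fun r => z' r.1 * w' r.2
    star ψ ⬝ᵥ (X *ᵥ ψ) = star zw ⬝ᵥ (M *ᵥ zw) := by
  intro ψ z' w' φ M zw
  have hs : (Real.sqrt k : ℂ) * (Real.sqrt k : ℂ) = (k : ℂ) := by
    norm_cast
    exact_mod_cast Real.mul_self_sqrt (Nat.cast_nonneg k)
  have hs0 : (Real.sqrt k : ℂ) ≠ 0 := by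
    simp [Real.sqrt_eq_zero', hk]
    positivity
  have hM : ∀ r c, M r c = (if r.1.1 = r.2.1 then (1:ℂ) else 0) *
      (if c.1.1 = c.2.1 then (1:ℂ) else 0) * X (r.1.2, r.2.2) (c.1.2, c.2.2) := by
    intro r c
    simp only [M, φ]
    split_ifs <;> simp
    rw [← hs]

    field_simp
  simp only [dotProduct, Matrix.mulVec, Pi.star_apply, hM]
  simp only [Fintype.sum_prod_type, Finset.mul_sum, Finset.sum_mul]
  simp only [zw, z', w', ψ, star_mul', mul_ite, ite_mul, mul_zero, zero_mul, one_mul, mul_one,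
    Finset.sum_ite_irrel, Finset.sum_const_zero, Finset.sum_ite_eq, Finset.sum_ite_eq',
    Finset.mem_univ, if_true, star_sum, Finset.mul_sum, Finset.sum_mul]
  conv_rhs =>
    rw [Finset.sum_comm]
    enter [2, a]
    rw [Finset.sum_comm]
    enter [2, b]
    rw [Finset.sum_comm]
    enter [2, c]
    rw [Finset.sum_comm]
    enter [2, e]
    rw [Finset.sum_comm]
  conv_rhs =>
    enter [2, a]
    enter [2, b]
    rw [Finset.sum_comm]
    enter [2, c]
    rw [Finset.sum_comm]
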